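/- Let d ≥ 2 and let U be a stand-alone σ_d-periodic gap (convex hull of a closed set U' ⊂ circle with σ_d^n(U') = U' for some n, with positively oriented monotone-covering boundary dynamics along the orbit, and images having pairwise disjoint interiors). Then every edge of U is either (pre)periodic (some forward image is a periodic chord) or (pre)critical (some forward image is a critical chord, i.e., degenerates to a point). -/

import Mathlib

noncomputable section

/-- The circle `ℝ/ℤ`. -/
abbrev S1 := AddCircle (1 : ℝ)

/-- The `d`-tupling map `σ_d(t) = d·t` on the circle. -/
def sig (d : ℕ) (x : S1) : S1 := d • x

/-- `StrictArc a b c` : `b` lies strictly inside the positively oriented open arc from `a` to `c`. -/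
def StrictArc (a b c : S1) : Prop :=
  ∃ x y z : ℝ, (x : S1) = a ∧ (y : S1) = b ∧ (z : S1) = c ∧ x < y ∧ y < z ∧ z < x + 1

/-- Two chords (given by ordered pairs of endpoints) are linked (cross): their endpoints
alternate on the circle. -/
def Linked (p q : S1 × S1) : Prop :=
  (StrictArc p.1 q.1 p.2 ∧ StrictArc p.2 q.2 p.1) ∨ (StrictArc p.1 q.2 p.2 ∧ StrictArc p.2 q.1 p.1)

/-- Two chords are disjoint: they share no endpoint and are not linked. -/
def ChordDisj (p q : S1 × S1) : Prop :=
  p.1 ≠ q.1 ∧ p.1 ≠ q.2 ∧ p.2 ≠ q.1 ∧ p.2 ≠ q.2 ∧ ¬ Linked p q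

/-- The σ_d-image of a chord, as the (unordered) set of images of the endpoints. -/
def chordIm (d : ℕ) (p : S1 × S1) : Set S1 := {sig d p.1, sig d p.2}
def circleMap1 : ℝ → ℂ := fun x => Complex.exp (2 * Real.pi * Complex.I * (x : ℂ))

theorem circleMap1_periodic : Function.Periodic circleMap1 1 := by
  intro x
  unfold circleMap1
  push_cast
  rw [mul_add, Complex.exp_add, mul_one, Complex.exp_two_pi_mul_I, mul_one]

/-- The standard embedding of the circle `ℝ/ℤ` into the plane (unit circle in `ℂ`). -/
def toC : S1 → ℂ := circleMap1_periodic.lift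

/-- The chord with endpoints `p.1, p.2`, realized as a straight segment in the closed disk. -/
def chordSeg (p : S1 × S1) : Set ℂ := segment ℝ (toC p.1) (toC p.2)
/-- `(x, y)` is a hole of the closed set `A`: both endpoints lie in `A` and the open
positively oriented arc from `x` to `y` misses `A`.  The chord `{x, y}` is then an edge of
the convex hull of `A`. -/
def IsHole (A : Set S1) (x y : S1) : Prop :=
  x ∈ A ∧ y ∈ A ∧ x ≠ y ∧ ∀ z ∈ A, ¬ StrictArc x z y

/-- σ_d restricted to `A` is positively oriented: every hole of `A` is collapsed to a point
or sent to a hole of the image set. -/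
def PosOriented (d : ℕ) (A : Set S1) : Prop :=
  ∀ x y, IsHole A x y →
    sig d x = sig d y ∨ IsHole (sig d '' A) (sig d x) (sig d y)

namespace GapAux

noncomputable def L (u : S1) : ℝ := (AddCircle.equivIco 1 0 u : ℝ)

lemma coe_L (u : S1) : ((L u : ℝ) : S1) = u := by
  conv_rhs => rw [← (AddCircle.equivIco (1:ℝ) 0).symm_apply_apply u,
    AddCircle.equivIco, QuotientAddGroup.equivIcoMod_symm_apply]
  simp only [L, AddCircle.equivIco]

lemma L_mem (u : S1) : L u ∈ Set.Ico (0:ℝ) 1 := by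
  simpa [L] using (AddCircle.equivIco (1:ℝ) 0 u).2

lemma L_coe (r : ℝ) : L ((r : ℝ) : S1) = Int.fract r := by
  have := AddCircle.coe_equivIco_mk_apply (p := (1:ℝ)) r
  simpa [L] using this

lemma L_pos {u : S1} (h : u ≠ 0) : 0 < L u := by
  rcases (L_mem u).1.lt_or_eq with h' | h'
  · exact h'
  · exact absurd (by rw [← coe_L u, ← h']; norm_num) h

lemma coe_add' (r s : ℝ) : ((r + s : ℝ) : S1) = (r : S1) + (s : S1) := rfl

lemma L_inj {u v : S1} (h : L u = L v) : u = v := by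
  rw [← coe_L u, ← coe_L v, h]

lemma coe_sub_eq {u v : S1} {a b : ℝ} (ha : (a : ℝ) = (L u)) (hb : (b : ℝ) = (L v)) :
    v = u + ((b - a : ℝ) : S1) := by
  rw [← coe_L u, ← coe_L v, ← ha, ← hb, ← coe_add']
  norm_num

lemma strictArc_mk (x : S1) {s t : ℝ} (h0 : 0 < s) (hst : s < t) (ht : t < 1) :
    StrictArc x (x + ((s : ℝ) : S1)) (x + ((t : ℝ) : S1)) := by
  induction x using QuotientAddGroup.induction_on with
  | H r =>
    exact ⟨r, r + s, r + t, rfl, (coe_add' r s).symm, (coe_add' r t).symm,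
      by linarith, by linarith, by linarith⟩

lemma hole_right_unique {A : Set S1} {x y y' : S1} (h : IsHole A x y) (h' : IsHole A x y') :
    y = y' := by
  by_contra hne
  obtain ⟨-, hyA, hxy, harc⟩ := h
  obtain ⟨-, hy'A, hxy', harc'⟩ := h'
  have hy : x + ((L (y - x) : ℝ) : S1) = y := by rw [coe_L]; abel
  have hy' : x + ((L (y' - x) : ℝ) : S1) = y' := by rw [coe_L]; abel
  have h1 : 0 < L (y - x) := L_pos (sub_ne_zero.mpr (Ne.symm hxy))
  have h2 : 0 < L (y' - x) := L_pos (sub_ne_zero.mpr (Ne.symm hxy'))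
  have h3 : L (y - x) < 1 := (L_mem _).2
  have h4 : L (y' - x) < 1 := (L_mem _).2
  have hne' : L (y - x) ≠ L (y' - x) := by
    intro h; apply hne; rw [← hy, ← hy', h]
  rcases hne'.lt_or_gt with hlt | hlt
  · have := strictArc_mk x h1 hlt h4
    rw [hy, hy'] at this
    exact harc' y hyA this
  · have := strictArc_mk x h2 hlt h3
    rw [hy, hy'] at this
    exact harc y' hy'A this

theorem aux (d n : ℕ) (hd : 2 ≤ d) (hn : 0 < n) (A : ℕ → Set S1)
    (hAper : ∀ i, A (i + n) = A i)
    (x y : ℕ → S1)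
    (hx : ∀ i, x (i + 1) = sig d (x i)) (hy : ∀ i, y (i + 1) = sig d (y i))
    (hhole : ∀ i, IsHole (A i) (x i) (y i)) :
    ∃ m m' : ℕ, m < m' ∧ x m' = x m ∧ y m' = y m := by
  have hd1 : (1 : ℝ) < d := by exact_mod_cast lt_of_lt_of_le one_lt_two hd
  have hdpos : (0 : ℝ) < d := by linarith
  set ℓ : ℕ → ℝ := fun i => L (y i - x i) with hℓ
  have hne0 : ∀ i, y i - x i ≠ 0 := fun i => sub_ne_zero.mpr (Ne.symm (hhole i).2.2.1)
  have hlpos : ∀ i, 0 < ℓ i := fun i => L_pos (hne0 i)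
  have hlt1 : ∀ i, ℓ i < 1 := fun i => (L_mem _).2
  have hyx : ∀ i, x i + ((ℓ i : ℝ) : S1) = y i := by
    intro i; rw [hℓ]; simp only []; rw [coe_L]; abel
  have hstep : ∀ i, ℓ i < 1 / (d : ℝ) → ℓ (i + 1) = d * ℓ i := by
    intro i h
    have hsub : y (i + 1) - x (i + 1) = ((d * ℓ i : ℝ) : S1) := by
      rw [hy, hx, sig, sig, ← smul_sub,
        show y i - x i = ((ℓ i : ℝ) : S1) from (coe_L _).symm,
        ← AddCircle.coe_nsmul, nsmul_eq_mul]
    have hbound : 0 ≤ (d : ℝ) * ℓ i ∧ (d : ℝ) * ℓ i < 1 := by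
      constructor
      · exact mul_nonneg hdpos.le (hlpos i).le
      · have := (lt_div_iff₀ hdpos).mp h; linarith
    calc ℓ (i + 1) = L (y (i + 1) - x (i + 1)) := rfl
      _ = Int.fract (d * ℓ i) := by rw [hsub, L_coe]
      _ = d * ℓ i := Int.fract_eq_self.mpr hbound
  have key : ∀ M, ∃ m, M ≤ m ∧ 1 / (d : ℝ) ≤ ℓ m := by
    intro M
    by_contra hK
    push_neg at hK
    have hgeo : ∀ j, ℓ (M + j) = d ^ j * ℓ M := by
      intro j; induction j with
      | zero => simp
      | succ j ih =>
        rw [show M + (j + 1) = (M + j) + 1 from rfl,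
          hstep (M + j) (hK (M + j) (Nat.le_add_right _ _)), ih]; ring
    obtain ⟨j, hj⟩ := pow_unbounded_of_one_lt (1 / ℓ M) hd1
    have h1 : ℓ (M + j) < 1 := hlt1 _
    rw [hgeo] at h1
    have h2 : 1 < (d : ℝ) ^ j * ℓ M := (div_lt_iff₀ (hlpos M)).mp hj
    linarith
  choose g hg1 hg2 using key
  set f : ℕ → ℕ := fun j => Nat.rec (g 0) (fun _ prev => g (prev + 1)) j with hf
  have hfs : ∀ j, f (j + 1) = g (f j + 1) := fun j => rfl
  have hfl : ∀ j, 1 / (d : ℝ) ≤ ℓ (f j) := by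
    intro j
    cases j with
    | zero => exact hg2 0
    | succ j => rw [hfs]; exact hg2 _
  have hmono : StrictMono f :=
    strictMono_nat_of_lt_succ fun j => by
      rw [hfs]; exact lt_of_lt_of_le (Nat.lt_succ_self _) (hg1 _)
  have hAmod : ∀ c i, A (i + n * c) = A i := by
    intro c
    induction c with
    | zero => intro i; simp
    | succ c ih =>
      intro i
      rw [show i + n * (c + 1) = (i + n * c) + n by ring, hAper, ih]
  have hAeq : ∀ i i', i ≤ i' → i % n = i' % n → A i' = A i := by
    intro i i' hle hmod
    obtain ⟨c, hc⟩ := (Nat.modEq_iff_dvd' hle).mp hmod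
    rw [show i' = i + n * c by omega, hAmod]
  -- separation claim
  have main : ∀ m m', m < m' → A m' = A m → 1 / (d : ℝ) ≤ ℓ m → 1 / (d : ℝ) ≤ ℓ m' →
      ⌊(d : ℝ) * L (x m)⌋ = ⌊(d : ℝ) * L (x m')⌋ → x m' = x m := by
    intro m m' _ hAe hl hl' hfloor
    have ht := L_mem (x m)
    have ht' := L_mem (x m')
    have hf1 := Int.lt_floor_add_one ((d : ℝ) * L (x m))
    have hf2 := Int.lt_floor_add_one ((d : ℝ) * L (x m'))
    have hf3 := Int.floor_le ((d : ℝ) * L (x m))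
    have hf4 := Int.floor_le ((d : ℝ) * L (x m'))
    rw [hfloor] at hf1 hf3
    have habs1 : L (x m') - L (x m) < 1 / d := by rw [lt_div_iff₀ hdpos]; nlinarith
    have habs2 : L (x m) - L (x m') < 1 / d := by rw [lt_div_iff₀ hdpos]; nlinarith
    rcases lt_trichotomy (L (x m)) (L (x m')) with hlt | heq | hlt
    · exfalso
      have hx' : x m' = x m + ((L (x m') - L (x m) : ℝ) : S1) := coe_sub_eq rfl rfl
      have harc := strictArc_mk (x m) (show 0 < L (x m') - L (x m) by linarith)
        (show L (x m') - L (x m) < ℓ m by linarith) (hlt1 m)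
      rw [hyx m, ← hx'] at harc
      exact (hhole m).2.2.2 (x m') (hAe ▸ (hhole m').1) harc
    · exact (L_inj heq).symm
    · exfalso
      have hx' : x m = x m' + ((L (x m) - L (x m') : ℝ) : S1) := coe_sub_eq rfl rfl
      have harc := strictArc_mk (x m') (show 0 < L (x m) - L (x m') by linarith)
        (show L (x m) - L (x m') < ℓ m' by linarith) (hlt1 m')
      rw [hyx m', ← hx'] at harc
      exact (hhole m').2.2.2 (x m) (hAe ▸ (hhole m).1) harc
  -- pigeonhole
  have hbound : ∀ j, (⌊(d : ℝ) * L (x (f j))⌋).toNat < d := by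
    intro j
    have h1 : ⌊(d : ℝ) * L (x (f j))⌋ < (d : ℤ) := by
      apply Int.floor_lt.mpr
      push_cast
      nlinarith [(L_mem (x (f j))).1, (L_mem (x (f j))).2]
    omega
  set F : ℕ → Fin n × Fin d := fun j =>
    (⟨f j % n, Nat.mod_lt _ hn⟩, ⟨(⌊(d : ℝ) * L (x (f j))⌋).toNat, hbound j⟩) with hF
  obtain ⟨j, j', hjj, hFe⟩ := Finite.exists_ne_map_eq_of_infinite F
  have hres : f j % n = f j' % n := congrArg (fun p => (p.1 : ℕ)) hFe
  have hton : (⌊(d : ℝ) * L (x (f j))⌋).toNat = (⌊(d : ℝ) * L (x (f j'))⌋).toNat :=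
    congrArg (fun p => (p.2 : ℕ)) hFe
  have hnn : ∀ j, 0 ≤ ⌊(d : ℝ) * L (x (f j))⌋ := fun j =>
    Int.floor_nonneg.mpr (mul_nonneg hdpos.le (L_mem _).1)
  have hfloor : ⌊(d : ℝ) * L (x (f j))⌋ = ⌊(d : ℝ) * L (x (f j'))⌋ := by
    have := hnn j; have := hnn j'; omega
  have final : ∀ a b : ℕ, f a < f b → A (f b) = A (f a) →
      1 / (d : ℝ) ≤ ℓ (f a) → 1 / (d : ℝ) ≤ ℓ (f b) →
      ⌊(d : ℝ) * L (x (f a))⌋ = ⌊(d : ℝ) * L (x (f b))⌋ →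
      ∃ m m' : ℕ, m < m' ∧ x m' = x m ∧ y m' = y m := by
    intro a b hab hAe ha hb hfl'
    have hxeq : x (f b) = x (f a) := main (f a) (f b) hab hAe ha hb hfl'
    have hyeq : y (f b) = y (f a) := by
      have hb' := hhole (f b)
      rw [hAe, hxeq] at hb'
      exact hole_right_unique hb' (hhole (f a))
    exact ⟨f a, f b, hab, hxeq, hyeq⟩
  rcases hjj.lt_or_gt with h | h
  · exact final j j' (hmono h) (hAeq _ _ (le_of_lt (hmono h)) hres) (hfl j) (hfl j') hfloor
  · exact final j' j (hmono h) (hAeq _ _ (le_of_lt (hmono h)) hres.symm) (hfl j') (hfl j)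
      hfloor.symm

end GapAux

/-- Let `U'` be a closed circle set generating a stand-alone `n`-periodic
gap: `σ_d^n(U') = U'`, the boundary dynamics along the orbit is positively oriented, and
the convex hulls of the sets in the orbit have pairwise disjoint interiors.  Then every
edge (hole) `{x, y}` of the gap is (pre)critical (some forward image degenerates to a
point) or (pre)periodic (some forward image is a periodic chord). -/
theorem gap_edges_preperiodic_or_precritical (d n : ℕ) (hd : 2 ≤ d) (hn : 0 < n)
    (U' : Set S1) (hclosed : IsClosed U') (hne : U'.Nonempty)
    (hinv : (sig d)^[n] '' U' = U')
    (hpos : ∀ i : ℕ, PosOriented d ((sig d)^[i] '' U'))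
    (hdisjint : ∀ i j : ℕ, i < n → j < n → i ≠ j →
      Disjoint (interior (convexHull ℝ (toC '' ((sig d)^[i] '' U'))))
        (interior (convexHull ℝ (toC '' ((sig d)^[j] '' U')))))
    (x y : S1) (hxy : IsHole U' x y) :
    ∃ m : ℕ, (sig d)^[m] x = (sig d)^[m] y ∨
      ∃ k : ℕ, 1 ≤ k ∧
        ({(sig d)^[m + k] x, (sig d)^[m + k] y} : Set S1) =
          {(sig d)^[m] x, (sig d)^[m] y} := by
  by_cases hcol : ∃ m, (sig d)^[m] x = (sig d)^[m] y
  · obtain ⟨m, h⟩ := hcol; exact ⟨m, Or.inl h⟩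
  push_neg at hcol
  have hAper : ∀ i, (sig d)^[i + n] '' U' = (sig d)^[i] '' U' := by
    intro i
    rw [Function.iterate_add, Set.image_comp, hinv]
  have hhole : ∀ i, IsHole ((sig d)^[i] '' U') ((sig d)^[i] x) ((sig d)^[i] y) := by
    intro i
    induction i with
    | zero => simpa using hxy
    | succ i ih =>
      rcases hpos i _ _ ih with hc | hh
      · exact absurd (by
          rw [Function.iterate_succ_apply', Function.iterate_succ_apply']
          exact hc) (hcol (i + 1))
      · rw [Function.iterate_succ', Set.image_comp]
        exact hh
  obtain ⟨m, m', hlt, hx', hy'⟩ := GapAux.aux d n hd hn (fun i => (sig d)^[i] '' U') hAper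
    (fun i => (sig d)^[i] x) (fun i => (sig d)^[i] y)
    (fun i => Function.iterate_succ_apply' _ _ _)
    (fun i => Function.iterate_succ_apply' _ _ _) hhole
  refine ⟨m, Or.inr ⟨m' - m, by omega, ?_⟩⟩
  rw [show m + (m' - m) = m' from by omega]
  rw [hx', hy']
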